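/- Let k be a field, (P, ⪯) a totally ordered set, and V a finite-dimensional k-vector space, and let V ⊗ k_P denote the constant persistence module with value V and identity structure maps. Suppose 0 → ⊕_{a∈A} k_{I_a} → V ⊗ k_P → ⊕_{b∈B} k_{J_b} → 0 is a short exact sequence of persistence modules (exact at every p ∈ P), where every interval I_a is unbounded below and different from P, and every interval J_b is unbounded above and different from P. Then A and B are finite and there is a bijection σ : A → B with J_{σ(a)} = P ∖ I_a for every a ∈ A. -/

import Mathlib

set_option linter.unusedSectionVars false

open Classical

universe u v w w'

section Persistence

variable (k : Type u) [Field k] (P : Type v) [LinearOrder P]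

/-- A persistence module over the poset `P`: a functor assigning to each `p : P` a
`k`-vector space and to each pair `p ⪰ p'` a linear map `M p → M p'`. -/
structure PersistenceModule where
  carrier : P → Type w
  [acg : ∀ p, AddCommGroup (carrier p)]
  [mod : ∀ p, Module k (carrier p)]
  map : ∀ {p p' : P}, p' ≤ p → (carrier p →ₗ[k] carrier p')
  map_id : ∀ p : P, map (le_refl p) = LinearMap.id
  map_comp : ∀ {p p' p'' : P} (h1 : p'' ≤ p') (h2 : p' ≤ p),
      (map h1).comp (map h2) = map (h1.trans h2)

attribute [instance] PersistenceModule.acg PersistenceModule.mod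

variable {k P}

/-- A morphism of persistence modules. -/
structure PersistenceHom (M : PersistenceModule.{u,v,w} k P)
    (N : PersistenceModule.{u,v,w'} k P) where
  f : ∀ p : P, M.carrier p →ₗ[k] N.carrier p
  comm : ∀ {p p' : P} (h : p' ≤ p), (N.map h).comp (f p) = (f p').comp (M.map h)

/-- An isomorphism of persistence modules. -/
structure PersistenceIso (M : PersistenceModule.{u,v,w} k P)
    (N : PersistenceModule.{u,v,w'} k P) where
  e : ∀ p : P, M.carrier p ≃ₗ[k] N.carrier p
  comm : ∀ {p p' : P} (h : p' ≤ p) (x : M.carrier p), e p' (M.map h x) = N.map h (e p x)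

variable (P)

/-- An interval of `P`: a nonempty convex subset. -/
def IsInterval (I : Set P) : Prop :=
  I.Nonempty ∧ ∀ ⦃a b c : P⦄, a ∈ I → c ∈ I → a ≤ b → b ≤ c → b ∈ I

variable (k)

/-- The fibre of the interval module `k_I` at `p`: a copy of `k` if `p ∈ I`, zero otherwise. -/
noncomputable def intervalCarrier (I : Set P) (p : P) : Submodule k k :=
  if p ∈ I then ⊤ else ⊥

theorem intervalCarrier_eq_zero {I : Set P} {p : P} (hp : p ∉ I)
    (x : intervalCarrier k P I p) : (x : k) = 0 := by
  have hx := x.2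
  simp only [intervalCarrier, if_neg hp, Submodule.mem_bot] at hx
  exact hx

/-- The structure maps of the interval module. -/
noncomputable def intervalMapAux (I : Set P) (p p' : P) :
    intervalCarrier k P I p →ₗ[k] intervalCarrier k P I p' where
  toFun x := ⟨if p' ∈ I then (x : k) else 0, by
    split_ifs with h
    · simp [intervalCarrier, h]
    · exact (intervalCarrier k P I p').zero_mem⟩
  map_add' x y := by
    apply Subtype.ext
    by_cases h : p' ∈ I <;> simp [h]
  map_smul' c x := by
    apply Subtype.ext
    by_cases h : p' ∈ I <;> simp [h]

/-- The interval module `k_I` associated to an interval `I ⊆ P`. -/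
noncomputable def intervalModule (I : Set P) (hI : IsInterval P I) :
    PersistenceModule.{u,v,u} k P where
  carrier p := intervalCarrier k P I p
  map {p p'} _ := intervalMapAux k P I p p'
  map_id p := by
    ext x
    by_cases h : p ∈ I
    · simp [intervalMapAux, h]
    · have hx := intervalCarrier_eq_zero k P h x
      simp [intervalMapAux, h, hx]
  map_comp {p p' p''} h1 h2 := by
    ext x
    by_cases h'' : p'' ∈ I
    · by_cases h' : p' ∈ I
      · simp [intervalMapAux, h', h'']
      · have hp : p ∉ I := fun hp => h' (hI.2 h'' hp h1 h2)
        have hx := intervalCarrier_eq_zero k P hp x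
        simp [intervalMapAux, h', h'', hx]
    · simp [intervalMapAux, h'']

/-- The pointwise direct sum of a family of persistence modules. -/
noncomputable def directSumPM {A : Type w'} (Ms : A → PersistenceModule.{u,v,w} k P) :
    PersistenceModule k P where
  carrier p := Π₀ a, (Ms a).carrier p
  map h := DFinsupp.mapRange.linearMap (fun a => (Ms a).map h)
  map_id p := by
    try dsimp only
    have h : (fun a => (Ms a).map (le_refl p)) = fun a => LinearMap.id := by
      funext a; exact (Ms a).map_id p
    rw [h, DFinsupp.mapRange.linearMap_id]
  map_comp h1 h2 := by
    try dsimp only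
    rw [← DFinsupp.mapRange.linearMap_comp]
    congr 1
    funext a
    exact (Ms a).map_comp h1 h2

end Persistence

universe w''

section MatchingAux


open Finset

variable {P : Type v} [LinearOrder P]

/-- Two upward closed sets in a linear order are comparable. -/
lemma upsets_comparable' {X Y : Set P}
    (hX : ∀ ⦃p q : P⦄, p ≤ q → p ∈ X → q ∈ X)
    (hY : ∀ ⦃p q : P⦄, p ≤ q → p ∈ Y → q ∈ Y) : X ⊆ Y ∨ Y ⊆ X := by
  by_contra h
  push_neg at h
  obtain ⟨x, hxX, hxY⟩ := Set.not_subset.mp h.1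
  obtain ⟨y, hyY, hyX⟩ := Set.not_subset.mp h.2
  rcases le_total x y with hxy | hyx
  · exact hyX (hX hxy hxX)
  · exact hxY (hY hyx hyY)

variable {A : Type w'} [Fintype A] {B : Type w''} [Fintype B]

lemma filter_subset_rep (U : A → Set P)
    (hU : ∀ a, ∀ ⦃p q : P⦄, p ≤ q → p ∈ U a → q ∈ U a)
    {S : Set P} (hS : S.Nonempty) :
    ∃ p0 ∈ S, (univ.filter fun a => S ⊆ U a) = (univ.filter fun a => p0 ∈ U a) := by
  classical
  by_cases hbad : ∀ a, S ⊆ U a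
  · exact ⟨hS.choose, hS.choose_spec, by
      rw [Finset.filter_true_of_mem (fun a _ => hbad a),
        Finset.filter_true_of_mem (fun a _ => hbad a hS.choose_spec)]⟩
  · push_neg at hbad
    have hwit : ∀ a : A, ∃ p, p ∈ S ∧ (¬ S ⊆ U a → p ∉ U a) := by
      intro a
      by_cases h : S ⊆ U a
      · exact ⟨hS.choose, hS.choose_spec, fun hc => absurd h hc⟩
      · obtain ⟨p, hpS, hpU⟩ := Set.not_subset.mp h
        exact ⟨p, hpS, fun _ => hpU⟩
    choose wit hwitS hwitU using hwit
    obtain ⟨a0, ha0⟩ := hbad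
    set bad : Finset A := univ.filter (fun a => ¬ S ⊆ U a) with hbaddef
    have hbne : (bad.image wit).Nonempty :=
      ⟨wit a0, Finset.mem_image_of_mem _ (by simp [hbaddef, ha0])⟩
    set p0 := (bad.image wit).min' hbne with hp0
    have hp0S : p0 ∈ S := by
      have hmem := Finset.min'_mem _ hbne
      rw [← hp0] at hmem
      obtain ⟨a, _, ha⟩ := Finset.mem_image.mp hmem
      rw [← ha]; exact hwitS a
    refine ⟨p0, hp0S, ?_⟩
    ext a
    simp only [Finset.mem_filter, Finset.mem_univ, true_and]
    constructor
    · intro h; exact h hp0S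
    · intro hp0a
      by_contra hns
      have haBad : a ∈ bad := by simp [hbaddef, hns]
      have hle : p0 ≤ wit a := Finset.min'_le _ _ (Finset.mem_image_of_mem _ haBad)
      exact (hwitU a hns) (hU a hle hp0a)

lemma card_filter_subset_le (U : A → Set P) (W : B → Set P)
    (hU : ∀ a, ∀ ⦃p q : P⦄, p ≤ q → p ∈ U a → q ∈ U a)
    (hcount : ∀ p : P,
      (univ.filter fun a => p ∈ U a).card = (univ.filter fun b => p ∈ W b).card)
    {S : Set P} (hS : S.Nonempty) :
    (univ.filter fun b => S ⊆ W b).card ≤ (univ.filter fun a => S ⊆ U a).card := by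
  classical
  obtain ⟨p0, hp0S, hrep⟩ := filter_subset_rep U hU hS
  rw [hrep, hcount p0]
  exact Finset.card_le_card
    (Finset.monotone_filter_right _ (fun b _ (h : S ⊆ W b) => h hp0S))

lemma card_filter_subset_eq (U : A → Set P) (W : B → Set P)
    (hU : ∀ a, ∀ ⦃p q : P⦄, p ≤ q → p ∈ U a → q ∈ U a)
    (hW : ∀ b, ∀ ⦃p q : P⦄, p ≤ q → p ∈ W b → q ∈ W b)
    (hcount : ∀ p : P,
      (univ.filter fun a => p ∈ U a).card = (univ.filter fun b => p ∈ W b).card)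
    {S : Set P} (hS : S.Nonempty) :
    (univ.filter fun a => S ⊆ U a).card = (univ.filter fun b => S ⊆ W b).card :=
  le_antisymm (card_filter_subset_le W U hW (fun p => (hcount p).symm) hS)
    (card_filter_subset_le U W hU hcount hS)

lemma card_filter_ssubset_le (U : A → Set P) (W : B → Set P)
    (hU : ∀ a, ∀ ⦃p q : P⦄, p ≤ q → p ∈ U a → q ∈ U a)
    (hW : ∀ b, ∀ ⦃p q : P⦄, p ≤ q → p ∈ W b → q ∈ W b)
    (hcount : ∀ p : P,
      (univ.filter fun a => p ∈ U a).card = (univ.filter fun b => p ∈ W b).card)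
    (S : Set P) :
    (univ.filter fun a => S ⊂ U a).card ≤ (univ.filter fun b => S ⊂ W b).card := by
  classical
  set GU : Finset A := univ.filter (fun a => S ⊂ U a) with hGU
  rcases GU.eq_empty_or_nonempty with h | h
  · simp [h]
  · obtain ⟨a1, ha1, hmin⟩ : ∃ a1 ∈ (↑GU : Set A), ∀ a ∈ (↑GU : Set A), U a ≤ U a1 → U a = U a1 := by
      obtain ⟨i, hi⟩ := (Set.toFinite (↑GU : Set A)).exists_minimalFor U _ (by exact_mod_cast h)
      exact ⟨i, hi.1, fun a ha hle => le_antisymm hle (hi.2 ha hle)⟩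
    have ha1' : S ⊂ U a1 := (Finset.mem_filter.mp ha1).2
    have hMle : ∀ a ∈ GU, U a1 ⊆ U a := by
      intro a ha
      rcases upsets_comparable' (hU a1) (hU a) with h1 | h1
      · exact h1
      · have := hmin a (by exact_mod_cast ha) h1
        rw [← this]
    obtain ⟨p1, hp1U, hp1S⟩ := Set.exists_of_ssubset ha1'
    set T : Set P := S ∪ Set.Ici p1 with hT
    have hTne : T.Nonempty := ⟨p1, Or.inr le_rfl⟩
    have hrepU : GU = univ.filter fun a => T ⊆ U a := by
      ext a
      simp only [hGU, Finset.mem_filter, Finset.mem_univ, true_and]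
      constructor
      · intro hss x hx
        rcases hx with hx | hx
        · exact hss.subset hx
        · exact hU a hx (hMle a (by simp [hGU, hss]) hp1U)
      · intro hsub
        have hS' : S ⊆ U a := fun x hx => hsub (Or.inl hx)
        have hp1a : p1 ∈ U a := hsub (Or.inr le_rfl)
        exact Set.ssubset_iff_subset_ne.mpr ⟨hS', fun hEq => hp1S (by rw [hEq]; exact hp1a)⟩
    calc GU.card = (univ.filter fun a => T ⊆ U a).card := by rw [hrepU]
      _ = (univ.filter fun b => T ⊆ W b).card := card_filter_subset_eq U W hU hW hcount hTne
      _ ≤ (univ.filter fun b => S ⊂ W b).card := by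
          apply Finset.card_le_card
          apply Finset.monotone_filter_right
          intro b _ (hsub : T ⊆ W b)
          have hS' : S ⊆ W b := fun x hx => hsub (Or.inl hx)
          have hp1b : p1 ∈ W b := hsub (Or.inr le_rfl)
          exact Set.ssubset_iff_subset_ne.mpr ⟨hS', fun hEq => hp1S (by rw [hEq]; exact hp1b)⟩

lemma card_filter_split {C : Type w} [Fintype C] (X : C → Set P) (S : Set P) :
    (univ.filter fun c => S ⊆ X c).card
      = (univ.filter fun c => X c = S).card + (univ.filter fun c => S ⊂ X c).card := by
  classical
  rw [← Finset.card_union_of_disjoint]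
  · congr 1
    ext c
    simp only [Finset.mem_filter, Finset.mem_univ, true_and, Finset.mem_union]
    constructor
    · intro h
      rcases h.ssubset_or_eq with h' | h'
      · exact Or.inr h'
      · exact Or.inl h'.symm
    · rintro (h | h)
      · exact h.symm.subset
      · exact h.subset
  · rw [Finset.disjoint_left]
    intro c hc hc'
    simp only [Finset.mem_filter] at hc hc'
    exact absurd (hc.2 ▸ hc'.2) (lt_irrefl _)

lemma card_fiber_eq (U : A → Set P) (W : B → Set P)
    (hU : ∀ a, ∀ ⦃p q : P⦄, p ≤ q → p ∈ U a → q ∈ U a)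
    (hW : ∀ b, ∀ ⦃p q : P⦄, p ≤ q → p ∈ W b → q ∈ W b)
    (hUne : ∀ a, (U a).Nonempty) (hWne : ∀ b, (W b).Nonempty)
    (hcount : ∀ p : P,
      (univ.filter fun a => p ∈ U a).card = (univ.filter fun b => p ∈ W b).card)
    (S : Set P) :
    (univ.filter fun a => U a = S).card = (univ.filter fun b => W b = S).card := by
  classical
  rcases S.eq_empty_or_nonempty with rfl | hS
  · rw [Finset.filter_false_of_mem (fun a _ h => (hUne a).ne_empty h),
      Finset.filter_false_of_mem (fun b _ h => (hWne b).ne_empty h)]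
    rfl
  · have h1 := card_filter_split U S
    have h2 := card_filter_split W S
    have h3 := card_filter_subset_eq U W hU hW hcount hS
    have h4 := le_antisymm (card_filter_ssubset_le U W hU hW hcount S)
      (card_filter_ssubset_le W U hW hU (fun p => (hcount p).symm) S)
    omega

lemma exists_matching (U : A → Set P) (W : B → Set P)
    (hU : ∀ a, ∀ ⦃p q : P⦄, p ≤ q → p ∈ U a → q ∈ U a)
    (hW : ∀ b, ∀ ⦃p q : P⦄, p ≤ q → p ∈ W b → q ∈ W b)
    (hUne : ∀ a, (U a).Nonempty) (hWne : ∀ b, (W b).Nonempty)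
    (hcount : ∀ p : P,
      (univ.filter fun a => p ∈ U a).card = (univ.filter fun b => p ∈ W b).card) :
    ∃ σ : A ≃ B, ∀ a, W (σ a) = U a := by
  classical
  have e : ∀ S : Set P, { a // U a = S } ≃ { b // W b = S } := by
    intro S
    apply Fintype.equivOfCardEq
    rw [Fintype.card_subtype, Fintype.card_subtype,
      card_fiber_eq U W hU hW hUne hWne hcount S]
  exact ⟨Equiv.ofFiberEquiv e, fun a => Equiv.ofFiberEquiv_map e a⟩

end MatchingAux

noncomputable def dfinsuppLinearEquivPi (R : Type*) [Semiring R] {ι : Type*} [Fintype ι]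
    (M : ι → Type*) [∀ i, AddCommMonoid (M i)] [∀ i, Module R (M i)] :
    (Π₀ i, M i) ≃ₗ[R] ∀ i, M i :=
  { DFinsupp.equivFunOnFintype with
    map_add' := fun f g => funext fun i => by
      simp [DFinsupp.equivFunOnFintype]
    map_smul' := fun c f => funext fun i => by
      simp [DFinsupp.equivFunOnFintype] }


section Statement16

variable (k : Type u) [Field k] (P : Type v) [LinearOrder P]

/-- An interval is bounded below if some point of `P` outside it lies strictly below a point
of it. -/
def BddBelowInterval (I : Set P) : Prop := ∃ p ∉ I, ∃ p' ∈ I, p < p'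

/-- An interval is bounded above if some point of `P` outside it lies strictly above a point
of it. -/
def BddAboveInterval (I : Set P) : Prop := ∃ p ∉ I, ∃ p' ∈ I, p' < p

/-- The constant persistence module with value `V` and identity structure maps. -/
def constPM (V : Type w) [AddCommGroup V] [Module k V] : PersistenceModule k P where
  carrier _ := V
  map _ := LinearMap.id
  map_id _ := rfl
  map_comp _ _ := rfl

/-- if `0 → ⊕_a k_{I_a} → V ⊗ k_P → ⊕_b k_{J_b} → 0` is a short exact sequence
of persistence modules, with `V` finite dimensional, every `I_a` unbounded below and `≠ P`,
and every `J_b` unbounded above and `≠ P`, then `A` and `B` are finite and there is a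
bijection `σ : A ≃ B` with `J_{σ(a)} = P ∖ I_a`. -/
theorem statement16 (V : Type u) [AddCommGroup V] [Module k V] [FiniteDimensional k V]
    {A : Type w'} {B : Type w''} (I : A → Set P) (J : B → Set P)
    (hI : ∀ a, IsInterval P (I a)) (hJ : ∀ b, IsInterval P (J b))
    (hIub : ∀ a, ¬ BddBelowInterval P (I a)) (hIne : ∀ a, I a ≠ Set.univ)
    (hJub : ∀ b, ¬ BddAboveInterval P (J b)) (hJne : ∀ b, J b ≠ Set.univ)
    (f : PersistenceHom (directSumPM k P (fun a => intervalModule k P (I a) (hI a)))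
      (constPM k P V))
    (g : PersistenceHom (constPM k P V)
      (directSumPM k P (fun b => intervalModule k P (J b) (hJ b))))
    (hf : ∀ p : P, Function.Injective (f.f p))
    (hg : ∀ p : P, Function.Surjective (g.f p))
    (hexact : ∀ p : P, LinearMap.range (f.f p) = LinearMap.ker (g.f p)) :
    Finite A ∧ Finite B ∧ ∃ σ : A ≃ B, ∀ a : A, J (σ a) = (I a)ᶜ := by
  classical
  set n := Module.finrank k V with hn
  haveI hVfin : ∀ p : P, Module.Finite k ((constPM k P V).carrier p) :=
    fun _ => inferInstanceAs (Module.Finite k V)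
  have hVr : ∀ p : P, Module.finrank k ((constPM k P V).carrier p) = n := fun _ => rfl
  -- I a is downward closed, J b is upward closed
  have hIdown : ∀ a, ∀ ⦃p q : P⦄, p ≤ q → q ∈ I a → p ∈ I a := by
    intro a p q hpq hq
    by_contra hp
    exact hIub a ⟨p, hp, q, hq, lt_of_le_of_ne hpq (fun h => hp (h ▸ hq))⟩
  have hJup : ∀ b, ∀ ⦃p q : P⦄, p ≤ q → p ∈ J b → q ∈ J b := by
    intro b p q hpq hp
    by_contra hq
    exact hJub b ⟨q, hq, p, hp, lt_of_le_of_ne hpq (fun h => hq (h ▸ hp))⟩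
  -- membership of 1 in interval carriers
  have honeI : ∀ (a : A) (p : P), p ∈ I a → (1 : k) ∈ intervalCarrier k P (I a) p := by
    intro a p hp
    rw [intervalCarrier, if_pos hp]
    exact Submodule.mem_top
  have honeJ : ∀ (b : B) (p : P), p ∈ J b → (1 : k) ∈ intervalCarrier k P (J b) p := by
    intro b p hp
    rw [intervalCarrier, if_pos hp]
    exact Submodule.mem_top
  -- L1 : pointwise bound on the A side
  have L1 : ∀ (s : Finset A) (p : P), (∀ a ∈ s, p ∈ I a) → s.card ≤ n := by
    intro s p hp
    let e : ↥s → Π₀ a : A, ↥(intervalCarrier k P (I a) p) :=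
      fun a => DFinsupp.single (a : A) (⟨1, honeI a p (hp a a.2)⟩ :
        ↥(intervalCarrier k P (I (a : A)) p))
    have hli : LinearIndependent k fun a : ↥s => f.f p (e a) := by
      rw [Fintype.linearIndependent_iff]
      intro c hc a0
      have h0 : f.f p (∑ a, c a • e a) = 0 := by
        rw [← hc]
        exact (map_sum (f.f p) (fun a => c a • e a) Finset.univ).trans
          (Finset.sum_congr rfl fun a _ => map_smul (f.f p) (c a) (e a))
      have h1 : (∑ a, c a • e a) = 0 := hf p (h0.trans (map_zero _).symm)
      have h2 := congrFun (congrArg DFunLike.coe h1) (a0 : A)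
      have h3 : (∑ a, c a • e a) (a0 : A) = c a0 • (⟨1, honeI a0 p (hp a0 a0.2)⟩ :
          ↥(intervalCarrier k P (I (a0 : A)) p)) := by
        rw [DFinsupp.finset_sum_apply]
        rw [Finset.sum_eq_single a0]
        · simp only [e, DFinsupp.smul_apply, DFinsupp.single_eq_same]
        · intro a _ ha
          simp only [e, DFinsupp.smul_apply]
          rw [DFinsupp.single_eq_of_ne (fun h => ha (Subtype.ext h.symm)), smul_zero]
        · intro h
          exact absurd (Finset.mem_univ a0) h
      rw [h3] at h2
      have h4 : c a0 * 1 = 0 := congrArg Subtype.val h2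
      simpa using h4
    have := hli.fintype_card_le_finrank
    rwa [Fintype.card_coe] at this
  -- L2 : pointwise bound on the B side
  have L2 : ∀ (s : Finset B) (p : P), (∀ b ∈ s, p ∈ J b) → s.card ≤ n := by
    intro s p hp
    let e : ↥s → Π₀ b : B, ↥(intervalCarrier k P (J b) p) :=
      fun b => DFinsupp.single (b : B) (⟨1, honeJ b p (hp b b.2)⟩ :
        ↥(intervalCarrier k P (J (b : B)) p))
    let gp : (constPM k P V).carrier p →ₗ[k] Π₀ b : B, ↥(intervalCarrier k P (J b) p) := g.f p
    have hu : ∀ b : ↥s, ∃ v, gp v = e b := fun b => hg p (e b)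
    choose u hu using hu
    have hli : LinearIndependent k u := by
      rw [Fintype.linearIndependent_iff]
      intro c hc b0
      have h5 : gp (∑ b, c b • u b) = ∑ b, c b • e b := by
        rw [map_sum]
        simp only [map_smul, hu]
      rw [hc, map_zero] at h5
      have h2 := congrFun (congrArg DFunLike.coe h5.symm) (b0 : B)
      have h3 : (∑ b, c b • e b) (b0 : B) = c b0 • (⟨1, honeJ b0 p (hp b0 b0.2)⟩ :
          ↥(intervalCarrier k P (J (b0 : B)) p)) := by
        rw [DFinsupp.finset_sum_apply]
        rw [Finset.sum_eq_single b0]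
        · simp only [e, DFinsupp.smul_apply, DFinsupp.single_eq_same]
        · intro b _ hb
          simp only [e, DFinsupp.smul_apply]
          rw [DFinsupp.single_eq_of_ne (fun h => hb (Subtype.ext h.symm)), smul_zero]
        · intro h
          exact absurd (Finset.mem_univ b0) h
      rw [h3] at h2
      have h4 : c b0 * 1 = 0 := congrArg Subtype.val h2
      simpa using h4
    have := hli.fintype_card_le_finrank
    rwa [Fintype.card_coe] at this
  -- finiteness
  have finA : Finite A := by
    by_contra hinf
    rw [not_finite_iff_infinite] at hinf
    obtain ⟨s, hcard⟩ := Finset.exists_card_eq (α := A) (n + 1)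
    choose q hq using fun a : A => (hI a).1
    have hs : s.Nonempty := by
      rw [← Finset.card_pos, hcard]; omega
    have hp : ∀ a ∈ s, (s.image q).min' (hs.image q) ∈ I a := by
      intro a ha
      exact hIdown a (Finset.min'_le _ _ (Finset.mem_image_of_mem q ha)) (hq a)
    have := L1 s _ hp
    omega
  have finB : Finite B := by
    by_contra hinf
    rw [not_finite_iff_infinite] at hinf
    obtain ⟨s, hcard⟩ := Finset.exists_card_eq (α := B) (n + 1)
    choose q hq using fun b : B => (hJ b).1
    have hs : s.Nonempty := by
      rw [← Finset.card_pos, hcard]; omega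
    have hp : ∀ b ∈ s, (s.image q).max' (hs.image q) ∈ J b := by
      intro b hb
      exact hJup b (Finset.le_max' _ _ (Finset.mem_image_of_mem q hb)) (hq b)
    have := L2 s _ hp
    omega
  refine ⟨finA, finB, ?_⟩
  letI : Fintype A := Fintype.ofFinite A
  letI : Fintype B := Fintype.ofFinite B
  -- pointwise dimension count
  have hrankA : ∀ p : P,
      Module.finrank k ((directSumPM k P fun a => intervalModule k P (I a) (hI a)).carrier p)
        = (Finset.univ.filter fun a => p ∈ I a).card := by
    intro p
    have e1 : Module.finrank k
        ((directSumPM k P fun a => intervalModule k P (I a) (hI a)).carrier p)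
        = Module.finrank k (∀ a, ↥(intervalCarrier k P (I a) p)) :=
      LinearEquiv.finrank_eq
        (dfinsuppLinearEquivPi k (fun a => ↥(intervalCarrier k P (I a) p)))
    rw [e1, Module.finrank_pi_fintype, Finset.card_filter]
    apply Finset.sum_congr rfl
    intro a _
    by_cases h : p ∈ I a
    · rw [if_pos h]
      have : intervalCarrier k P (I a) p = ⊤ := if_pos h
      rw [this, finrank_top, Module.finrank_self]
    · rw [if_neg h]
      have : intervalCarrier k P (I a) p = ⊥ := if_neg h
      rw [this, finrank_bot]
  have hrankB : ∀ p : P,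
      Module.finrank k ((directSumPM k P fun b => intervalModule k P (J b) (hJ b)).carrier p)
        = (Finset.univ.filter fun b => p ∈ J b).card := by
    intro p
    have e1 : Module.finrank k
        ((directSumPM k P fun b => intervalModule k P (J b) (hJ b)).carrier p)
        = Module.finrank k (∀ b, ↥(intervalCarrier k P (J b) p)) :=
      LinearEquiv.finrank_eq
        (dfinsuppLinearEquivPi k (fun b => ↥(intervalCarrier k P (J b) p)))
    rw [e1, Module.finrank_pi_fintype, Finset.card_filter]
    apply Finset.sum_congr rfl
    intro b _
    by_cases h : p ∈ J b
    · rw [if_pos h]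
      have : intervalCarrier k P (J b) p = ⊤ := if_pos h
      rw [this, finrank_top, Module.finrank_self]
    · rw [if_neg h]
      have : intervalCarrier k P (J b) p = ⊥ := if_neg h
      rw [this, finrank_bot]
  have hcount : ∀ p : P, (Finset.univ.filter fun a => p ∈ I a).card
      + (Finset.univ.filter fun b => p ∈ J b).card = n := by
    intro p
    have h1 := LinearMap.finrank_range_add_finrank_ker (g.f p)
    have hrange : LinearMap.range (g.f p) = ⊤ := LinearMap.range_eq_top.mpr (hg p)
    rw [hrange, finrank_top, ← hexact p, LinearMap.finrank_range_of_inj (hf p)] at h1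
    rw [hrankB p, hrankA p, hVr p] at h1
    omega
  -- special points
  have ptAllI : Nonempty A → ∃ p : P, ∀ a, p ∈ I a := by
    intro hA
    choose q hq using fun a : A => (hI a).1
    have hne : (Finset.univ.image q).Nonempty := Finset.Nonempty.image Finset.univ_nonempty q
    refine ⟨(Finset.univ.image q).min' hne, fun a => ?_⟩
    exact hIdown a (Finset.min'_le _ _ (Finset.mem_image_of_mem q (Finset.mem_univ a))) (hq a)
  have ptNoneI : Nonempty A → ∃ p : P, ∀ a, p ∉ I a := by
    intro hA
    choose q hq using fun a : A => Set.ne_univ_iff_exists_notMem _ |>.mp (hIne a)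
    have hne : (Finset.univ.image q).Nonempty := Finset.Nonempty.image Finset.univ_nonempty q
    refine ⟨(Finset.univ.image q).max' hne, fun a hmem => ?_⟩
    exact hq a (hIdown a (Finset.le_max' _ _ (Finset.mem_image_of_mem q (Finset.mem_univ a))) hmem)
  have ptAllJ : Nonempty B → ∃ p : P, ∀ b, p ∈ J b := by
    intro hB
    choose q hq using fun b : B => (hJ b).1
    have hne : (Finset.univ.image q).Nonempty := Finset.Nonempty.image Finset.univ_nonempty q
    refine ⟨(Finset.univ.image q).max' hne, fun b => ?_⟩
    exact hJup b (Finset.le_max' _ _ (Finset.mem_image_of_mem q (Finset.mem_univ b))) (hq b)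
  have ptNoneJ : Nonempty B → ∃ p : P, ∀ b, p ∉ J b := by
    intro hB
    choose q hq using fun b : B => Set.ne_univ_iff_exists_notMem _ |>.mp (hJne b)
    have hne : (Finset.univ.image q).Nonempty := Finset.Nonempty.image Finset.univ_nonempty q
    refine ⟨(Finset.univ.image q).min' hne, fun b hmem => ?_⟩
    exact hq b (hJup b (Finset.min'_le _ _ (Finset.mem_image_of_mem q (Finset.mem_univ b))) hmem)
  rcases isEmpty_or_nonempty A with hA | hA
  · rcases isEmpty_or_nonempty B with hB | hB
    · exact ⟨Equiv.equivOfIsEmpty A B, fun a => isEmptyElim a⟩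
    · exfalso
      obtain ⟨p1, hp1⟩ := ptNoneJ hB
      have h1 := hcount p1
      rw [Finset.univ_eq_empty (α := A), Finset.filter_empty,
        Finset.filter_false_of_mem (fun b _ => hp1 b)] at h1
      simp only [Finset.card_empty] at h1
      obtain ⟨b0⟩ := hB
      obtain ⟨qq, hqJ⟩ := (hJ b0).1
      have h2 := hcount qq
      have h3 : 0 < (Finset.univ.filter fun b => qq ∈ J b).card :=
        Finset.card_pos.mpr ⟨b0, by simp [hqJ]⟩
      omega
  rcases isEmpty_or_nonempty B with hB | hB
  · exfalso
    obtain ⟨p1, hp1⟩ := ptNoneI hA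
    have h1 := hcount p1
    rw [Finset.univ_eq_empty (α := B), Finset.filter_empty,
      Finset.filter_false_of_mem (fun a _ => hp1 a)] at h1
    simp only [Finset.card_empty] at h1
    obtain ⟨a0⟩ := hA
    obtain ⟨qq, hqI⟩ := (hI a0).1
    have h2 := hcount qq
    have h3 : 0 < (Finset.univ.filter fun a => qq ∈ I a).card :=
      Finset.card_pos.mpr ⟨a0, by simp [hqI]⟩
    omega
  -- both nonempty: card A = n
  have hcardA : Fintype.card A = n := by
    obtain ⟨p1, hp1⟩ := ptNoneJ hB
    obtain ⟨p2, hp2⟩ := ptAllI hA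
    have h1 := hcount p1
    rw [Finset.filter_false_of_mem (fun b _ => hp1 b)] at h1
    simp only [Finset.card_empty] at h1
    have h2 : (Finset.univ.filter fun a => p1 ∈ I a).card ≤ Fintype.card A := by
      rw [← Finset.card_univ]
      exact Finset.card_filter_le _ _
    have h3 := hcount p2
    rw [Finset.filter_true_of_mem (fun a _ => hp2 a), Finset.card_univ] at h3
    omega
  -- the complement count
  have hcc : ∀ p : P, (Finset.univ.filter fun a => p ∈ (I a)ᶜ).card
      = (Finset.univ.filter fun b => p ∈ J b).card := by
    intro p
    have h1 := hcount p
    have h2 : (Finset.univ.filter fun a => p ∈ I a).card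
        + (Finset.univ.filter fun a => ¬ p ∈ I a).card = Fintype.card A := by
      rw [Finset.card_filter_add_card_filter_not, Finset.card_univ]
    have h3 : (Finset.univ.filter fun a => p ∈ (I a)ᶜ)
        = (Finset.univ.filter fun a => ¬ p ∈ I a) := by
      apply Finset.filter_congr
      intro a _
      simp [Set.mem_compl_iff]
    rw [h3]
    omega
  obtain ⟨σ, hσ⟩ := exists_matching (fun a => (I a)ᶜ) J
    (fun a p q hpq hp hq => hp (hIdown a hpq hq))
    hJup
    (fun a => Set.nonempty_compl.mpr (hIne a))
    (fun b => (hJ b).1)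
    (fun p => by rw [Finset.filter_congr_decidable]; exact hcc p)
  exact ⟨σ, hσ⟩


end Statement16
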